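/- Let G be a finite (additive) abelian group, n ≥ 1, and fix x = (x_1, …, x_n) ∈ G^n. Let (r_{ij})_{1 ≤ i < j ≤ n} be independent, uniformly distributed random elements of G, and define the output shares y_i := x_i + ∑_{j > i} r_{ij} − ∑_{j < i} r_{ji}. Then the random vector (y_1, …, y_n) is uniformly distributed on the coset {y ∈ G^n : y_1 + ⋯ + y_n = x_1 + ⋯ + x_n}. (Output distribution of the StrongRefresh gadget: it preserves the shared value and its output sharing is uniform among all sharings of that value.) -/

import Mathlib

open Finset
open scoped ENNReal

namespace SR

variable {G : Type} [AddCommGroup G] [Fintype G] [DecidableEq G] {n : ℕ}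

abbrev P (n : ℕ) := {p : Fin n × Fin n // p.1 < p.2}

def L (r : P n → G) : Fin n → G := fun i =>
  (∑ p : P n, if p.1.1 = i then r p else 0) - (∑ p : P n, if p.1.2 = i then r p else 0)

def Lhom : (P n → G) →+ (Fin n → G) where
  toFun := L
  map_zero' := by funext i; simp [L]
  map_add' := fun r s => by
    funext i
    simp only [L, Pi.add_apply]
    have h1 : ∀ p : P n, (if p.1.1 = i then r p + s p else 0)
        = (if p.1.1 = i then r p else 0) + (if p.1.1 = i then s p else 0) := fun p => by
      split <;> simp
    have h2 : ∀ p : P n, (if p.1.2 = i then r p + s p else 0)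
        = (if p.1.2 = i then r p else 0) + (if p.1.2 = i then s p else 0) := fun p => by
      split <;> simp
    rw [Finset.sum_congr rfl fun p _ => h1 p, Finset.sum_congr rfl fun p _ => h2 p,
      Finset.sum_add_distrib, Finset.sum_add_distrib]
    abel

def f (x : Fin n → G) (r : P n → G) : Fin n → G := fun i =>
  x i + (∑ p : P n, if p.1.1 = i then r p else 0)
      - (∑ p : P n, if p.1.2 = i then r p else 0)

lemma f_eq (x : Fin n → G) (r : P n → G) : f x r = x + L r := by
  funext i; simp [f, L, add_sub_assoc]

lemma sum_L (r : P n → G) : ∑ i, L r i = 0 := by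
  simp only [L]
  rw [Finset.sum_sub_distrib, Finset.sum_comm, Finset.sum_comm (s := Finset.univ (α := Fin n))]
  simp [Finset.sum_ite_eq]

lemma sum_f (x : Fin n → G) (r : P n → G) : ∑ i, f x r i = ∑ i, x i := by
  rw [f_eq]
  simp [Finset.sum_add_distrib, sum_L]

lemma surj (hn : 1 ≤ n) (x y : Fin n → G) (hy : ∑ i, y i = ∑ i, x i) :
    ∃ r : P n → G, f x r = y := by
  set last : Fin n := ⟨n - 1, by omega⟩ with hlast
  have hle : ∀ i : Fin n, i ≤ last := fun i => by
    simp only [hlast, Fin.le_def]; omega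
  set z : Fin n → G := y - x with hz
  have hzsum : ∑ i, z i = 0 := by
    simp [hz, Finset.sum_sub_distrib, hy]
  refine ⟨fun p => if p.1.2 = last then z p.1.1 else 0, ?_⟩
  rw [f_eq]
  suffices h : L (fun p : P n => if p.1.2 = last then z p.1.1 else 0) = z by
    rw [h]; simp [hz]
  funext i
  simp only [L]
  by_cases hi : i = last
  · subst hi
    have h1 : (∑ p : P n, if p.1.1 = last then (if p.1.2 = last then z p.1.1 else 0) else 0)
        = 0 := by
      refine Finset.sum_eq_zero fun p _ => ?_
      split
      · next ha =>
        split
        · next hb => exact absurd p.2 (by rw [ha, hb]; exact lt_irrefl _)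
        · rfl
      · rfl
    have h2 : (∑ p : P n, if p.1.2 = last then (if p.1.2 = last then z p.1.1 else 0) else 0)
        = ∑ j ∈ Finset.univ.erase last, z j := by
      have hstep : (∑ p : P n, if p.1.2 = last then (if p.1.2 = last then z p.1.1 else 0) else 0)
          = ∑ p ∈ Finset.univ.filter (fun p : P n => p.1.2 = last), z p.1.1 := by
        rw [Finset.sum_filter]
        refine Finset.sum_congr rfl fun p _ => ?_
        split <;> simp_all
      rw [hstep]
      refine Finset.sum_bij' (fun p _ => p.1.1)
        (fun a ha => ⟨(a, last), lt_of_le_of_ne (hle a) (Finset.ne_of_mem_erase ha)⟩)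
        ?_ ?_ ?_ ?_ ?_
      · intro p hp
        rw [Finset.mem_filter] at hp
        refine Finset.mem_erase.2 ⟨?_, Finset.mem_univ _⟩
        intro hcon
        have hc : (p : Fin n × Fin n).1 = last := hcon
        exact absurd p.2 (by rw [hc, hp.2]; exact lt_irrefl _)
      · intro a ha
        simp
      · intro p hp
        rw [Finset.mem_filter] at hp
        exact Subtype.ext (Prod.ext rfl hp.2.symm)
      · intro a ha
        rfl
      · intro p hp
        rfl
    rw [h1, h2]
    have := Finset.add_sum_erase Finset.univ z (Finset.mem_univ last)
    rw [hzsum] at this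
    have : ∑ j ∈ Finset.univ.erase last, z j = -z last := by linear_combination (norm := abel) this
    rw [this]
    abel
  · have hlt : i < last := lt_of_le_of_ne (hle i) hi
    have h1 : (∑ p : P n, if p.1.1 = i then (if p.1.2 = last then z p.1.1 else 0) else 0)
        = z i := by
      rw [Finset.sum_eq_single (⟨(i, last), hlt⟩ : P n)]
      · simp
      · intro p _ hpe
        split
        · next ha =>
          split
          · next hb => exact absurd (Subtype.ext (Prod.ext ha hb)) hpe
          · rfl
        · rfl
      · intro h; exact absurd (Finset.mem_univ _) h
    have h2 : (∑ p : P n, if p.1.2 = i then (if p.1.2 = last then z p.1.1 else 0) else 0)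
        = 0 := by
      refine Finset.sum_eq_zero fun p _ => ?_
      split
      · next ha =>
        split
        · next hb => exact absurd (ha.symm.trans hb) hi
        · rfl
      · rfl
    rw [h1, h2, sub_zero]


lemma f_combo (x : Fin n → G) (a b c : P n → G) :
    f x (a + b - c) = f x a + f x b - f x c := by
  have hL : ∀ r : P n → G, L r = Lhom r := fun r => rfl
  simp only [f_eq, hL, map_sub, map_add]
  abel

lemma fiber_card (hn : 1 ≤ n) (x y y' : Fin n → G)
    (hy : ∑ i, y i = ∑ i, x i) (hy' : ∑ i, y' i = ∑ i, x i) :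
    (Finset.univ.filter fun r : P n → G => f x r = y).card
      = (Finset.univ.filter fun r : P n → G => f x r = y').card := by
  obtain ⟨r₀, hr₀⟩ := surj hn x y hy
  obtain ⟨r₁, hr₁⟩ := surj hn x y' hy'
  refine Finset.card_bij' (fun r _ => r + r₁ - r₀) (fun r _ => r + r₀ - r₁) ?_ ?_ ?_ ?_
  · intro r hr
    rw [Finset.mem_filter] at hr ⊢
    refine ⟨Finset.mem_univ _, ?_⟩
    rw [f_combo, hr.2, hr₀, hr₁]
    abel
  · intro r hr
    rw [Finset.mem_filter] at hr ⊢
    refine ⟨Finset.mem_univ _, ?_⟩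
    rw [f_combo, hr.2, hr₀, hr₁]
    abel
  · intro r _
    funext i
    simp only [Pi.add_apply, Pi.sub_apply]
    abel
  · intro r _
    funext i
    simp only [Pi.add_apply, Pi.sub_apply]
    abel

end SR

set_option maxHeartbeats 1000000 in
/-- **Output distribution of the `StrongRefresh` gadget.**
For fixed input shares `x : Fin n → G` and independent uniform randomness
`r` indexed by the pairs `i < j`, the output shares
`y i = x i + ∑_{j > i} r (i,j) − ∑_{j < i} r (j,i)`
are uniformly distributed on the coset `{y : ∑ i, y i = ∑ i, x i}`. -/
theorem stmt_12 (G : Type) [AddCommGroup G] [Fintype G] [DecidableEq G]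
    (n : ℕ) (hn : 1 ≤ n) (x : Fin n → G) :
    PMF.map
      (fun r : {p : Fin n × Fin n // p.1 < p.2} → G => fun i : Fin n =>
        x i + (∑ p : {p : Fin n × Fin n // p.1 < p.2}, if p.1.1 = i then r p else 0)
            - (∑ p : {p : Fin n × Fin n // p.1 < p.2}, if p.1.2 = i then r p else 0))
      (PMF.uniformOfFintype ({p : Fin n × Fin n // p.1 < p.2} → G))
    = PMF.uniformOfFinset
        (Finset.univ.filter (fun y : Fin n → G => ∑ i, y i = ∑ i, x i))
        ⟨x, by simp⟩ := by
  classical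
  have hfun : (fun r : {p : Fin n × Fin n // p.1 < p.2} → G => fun i : Fin n =>
        x i + (∑ p : {p : Fin n × Fin n // p.1 < p.2}, if p.1.1 = i then r p else 0)
            - (∑ p : {p : Fin n × Fin n // p.1 < p.2}, if p.1.2 = i then r p else 0))
      = SR.f x := rfl
  rw [hfun]
  set s : Finset (Fin n → G) := Finset.univ.filter (fun y => ∑ i, y i = ∑ i, x i) with hs
  have hxs : x ∈ s := by simp [hs]
  have hscard : s.card ≠ 0 := Finset.card_ne_zero_of_mem hxs
  set c := (Finset.univ.filter fun r : SR.P n → G => SR.f x r = x).card with hc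
  have hc0 : c ≠ 0 := by
    obtain ⟨r, hr⟩ := SR.surj hn x x rfl
    exact Finset.card_ne_zero_of_mem (Finset.mem_filter.2 ⟨Finset.mem_univ r, hr⟩)
  have hcardN : Fintype.card (SR.P n → G) = s.card * c := by
    rw [← Finset.card_univ,
      Finset.card_eq_sum_card_fiberwise (f := SR.f x) (t := s)
        (fun r _ => by simp [hs, SR.sum_f]),
      Finset.sum_congr rfl
        (fun y hy => SR.fiber_card hn x y x
          (by simpa [hs] using hy) (by rfl)),
      Finset.sum_const, smul_eq_mul]
  ext y
  rw [PMF.map_apply, tsum_fintype]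
  erw [PMF.uniformOfFinset_apply]
  simp only [PMF.uniformOfFintype_apply]
  have key : (∑ b : SR.P n → G,
        if y = SR.f x b then ((Fintype.card (SR.P n → G) : ℝ≥0∞))⁻¹ else 0)
      = (if y ∈ s then ((s.card : ℝ≥0∞))⁻¹ else 0) := by
    rw [← Finset.sum_filter, Finset.sum_const, nsmul_eq_mul]
    have hflip : (Finset.univ.filter fun a : SR.P n → G => y = SR.f x a)
        = (Finset.univ.filter fun r : SR.P n → G => SR.f x r = y) := by
      ext r; simp [eq_comm]
    rw [hflip]
    by_cases hy : y ∈ s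
    · rw [if_pos hy]
      have hys : ∑ i, y i = ∑ i, x i := by simpa [hs] using hy
      rw [SR.fiber_card hn x y x hys rfl, ← hc, hcardN]
      push_cast
      rw [ENNReal.mul_inv (Or.inr (ENNReal.natCast_ne_top _)) (Or.inl (ENNReal.natCast_ne_top _)),
        mul_left_comm, ENNReal.mul_inv_cancel (by exact_mod_cast hc0) (ENNReal.natCast_ne_top _),
        mul_one]
    · rw [if_neg hy]
      have hempty : (Finset.univ.filter fun r : SR.P n → G => SR.f x r = y) = ∅ := by
        refine Finset.filter_eq_empty_iff.2 fun r _ => ?_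
        intro hcon
        exact hy (by simp [hs, ← hcon, SR.sum_f])
      rw [hempty]
      simp
  convert key using 2
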